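/- The class 𝒟 of infinite binary words of the form 0^l(Ds) or 1^l(Ds), with l ≥ 0 and s Sturmian, is stable under the shift T: if w ∈ 𝒟 then Tw ∈ 𝒟. -/

import Mathlib

/-- A sequence (indexed from 1) over the alphabet {0,1}. -/
def IsBinary (s : ℕ → ℤ) : Prop := ∀ i, s i = 0 ∨ s i = 1

/-- `s` is a Sturmian word of slope `θ` (floor or ceiling form). -/
def IsSturmian (θ : ℝ) (s : ℕ → ℤ) : Prop :=
  Irrational θ ∧ θ ∈ Set.Ioo (0:ℝ) 1 ∧
    ∃ ρ : ℝ,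
      (∀ n : ℕ, 1 ≤ n → s n = ⌊((n:ℝ)+1)*θ+ρ⌋ - ⌊(n:ℝ)*θ+ρ⌋) ∨
      (∀ n : ℕ, 1 ≤ n → s n = ⌈((n:ℝ)+1)*θ+ρ⌉ - ⌈(n:ℝ)*θ+ρ⌉)

/-- The characteristic Sturmian word of slope `θ`. -/
noncomputable def charWord (θ : ℝ) : ℕ → ℤ := fun n => ⌊((n:ℝ)+1)*θ⌋ - ⌊(n:ℝ)*θ⌋

/-- `tval r s = ∑_{i ≥ 1} s i * r ^ i`. -/
noncomputable def tval (r : ℝ) (s : ℕ → ℤ) : ℝ := ∑' i : ℕ, (s (i+1) : ℝ) * r^(i+1)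

/-- Equality of infinite words (positions ≥ 1). -/
def EqW (s s' : ℕ → ℤ) : Prop := ∀ i, 1 ≤ i → s i = s' i

/-- Strict lexicographic order on infinite words (positions ≥ 1). -/
def LexLt (s s' : ℕ → ℤ) : Prop :=
  ∃ n, 1 ≤ n ∧ (∀ i, 1 ≤ i → i < n → s i = s' i) ∧ s n < s' n

def LexLe (s s' : ℕ → ℤ) : Prop := LexLt s s' ∨ EqW s s'

/-- Strict alternate order on infinite words. -/
def AltLt (s s' : ℕ → ℤ) : Prop :=
  ∃ n, 1 ≤ n ∧ (∀ i, 1 ≤ i → i < n → s i = s' i) ∧ (-1:ℤ)^n * (s' n - s n) = 1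

def AltLe (s s' : ℕ → ℤ) : Prop := AltLt s s' ∨ EqW s s'

/-- The doubling map `D(w₁w₂…) = w₁w₁w₂w₂…`. -/
def Dbl (w : ℕ → ℤ) : ℕ → ℤ := fun n => w ((n+1)/2)

/-- The shift map `T(w₁w₂w₃…) = w₂w₃…`. -/
def Shf (w : ℕ → ℤ) : ℕ → ℤ := fun n => w (n+1)

/-- The word `a^l s` : the letter `a` repeated `l` times followed by `s`. -/
def Prepend (a : ℤ) (l : ℕ) (s : ℕ → ℤ) : ℕ → ℤ := fun n => if n ≤ l then a else s (n - l)

/-- The finite word `u` followed by the infinite word `s`. -/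
def Cat (u : List ℤ) (s : ℕ → ℤ) : ℕ → ℤ :=
  fun n => if n ≤ u.length then u.getD (n-1) 0 else s (n - u.length)

/-- The finite word `u` occurs as a contiguous block of `s` (at a position ≥ 1). -/
def Subword (u : List ℤ) (s : ℕ → ℤ) : Prop :=
  ∃ n, 1 ≤ n ∧ ∀ i, i < u.length → s (n + i) = u.getD i 0

/-- `s` is aperiodic: not eventually periodic. -/
def Aperiodic (s : ℕ → ℤ) : Prop :=
  ¬ ∃ k, 1 ≤ k ∧ ∃ N, 1 ≤ N ∧ ∀ n, N ≤ n → s n = s (n + k)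

/-- `w` has slope `θ`: the averages of its letters tend to `θ`. -/
def HasSlope (w : ℕ → ℤ) (θ : ℝ) : Prop :=
  Filter.Tendsto (fun n : ℕ => (∑ i ∈ Finset.Icc 1 n, (w i : ℝ)) / n)
    Filter.atTop (nhds θ)

/-- The class `S` of words of the form `0^l s` or `1^l s` with `s` Sturmian. -/
def MemS (w : ℕ → ℤ) : Prop :=
  ∃ a l s θ, (a = (0:ℤ) ∨ a = 1) ∧ IsSturmian θ s ∧ EqW w (Prepend a l s)

/-- The class `𝒟` of words of the form `0^l (D s)` or `1^l (D s)` with `s` Sturmian. -/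
def MemD (w : ℕ → ℤ) : Prop :=
  ∃ a l s θ, (a = (0:ℤ) ∨ a = 1) ∧ IsSturmian θ s ∧ EqW w (Prepend a l (Dbl s))

/-- The class `𝒫 = D(Σ^ℕ) ∪ T(D(Σ^ℕ))` with `Σ = {0,1}`. -/
def MemP (w : ℕ → ℤ) : Prop :=
  (∃ u, IsBinary u ∧ EqW w (Dbl u)) ∨ (∃ u, IsBinary u ∧ EqW w (Shf (Dbl u)))


lemma shf_sturmian {θ : ℝ} {s : ℕ → ℤ} (h : IsSturmian θ s) : IsSturmian θ (Shf s) := by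
  obtain ⟨h1, h2, ρ, h3 | h3⟩ := h
  · refine ⟨h1, h2, ρ + θ, Or.inl fun n hn => ?_⟩
    have := h3 (n+1) (by omega)
    simp only [Shf]
    rw [this]; push_cast; ring_nf
  · refine ⟨h1, h2, ρ + θ, Or.inr fun n hn => ?_⟩
    have := h3 (n+1) (by omega)
    simp only [Shf]
    rw [this]; push_cast; ring_nf

lemma sturmian_binary {θ : ℝ} {s : ℕ → ℤ} (h : IsSturmian θ s) (n : ℕ) (hn : 1 ≤ n) :
    s n = 0 ∨ s n = 1 := by
  obtain ⟨h1, ⟨hθ0, hθ1⟩, ρ, h3 | h3⟩ := h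
  · rw [h3 n hn]
    have key : ∀ x : ℝ, ⌊x + θ⌋ = ⌊x⌋ ∨ ⌊x + θ⌋ = ⌊x⌋ + 1 := by
      intro x
      have l1 : ⌊x⌋ ≤ ⌊x + θ⌋ := Int.floor_le_floor (by linarith)
      have l2 : ⌊x + θ⌋ ≤ ⌊x + 1⌋ := Int.floor_le_floor (by linarith)
      rw [show x + (1:ℝ) = x + (1:ℤ) by norm_num, Int.floor_add_intCast] at l2
      omega
    have := key ((n:ℝ)*θ + ρ)
    have he : ((n:ℝ)+1)*θ+ρ = ((n:ℝ)*θ+ρ) + θ := by ring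
    rw [he]
    omega
  · rw [h3 n hn]
    have key : ∀ x : ℝ, ⌈x + θ⌉ = ⌈x⌉ ∨ ⌈x + θ⌉ = ⌈x⌉ + 1 := by
      intro x
      have l1 : ⌈x⌉ ≤ ⌈x + θ⌉ := Int.ceil_le_ceil (by linarith)
      have l2 : ⌈x + θ⌉ ≤ ⌈x + 1⌉ := Int.ceil_le_ceil (by linarith)
      rw [show x + (1:ℝ) = x + (1:ℤ) by norm_num, Int.ceil_add_intCast] at l2
      omega
    have := key ((n:ℝ)*θ + ρ)
    have he : ((n:ℝ)+1)*θ+ρ = ((n:ℝ)*θ+ρ) + θ := by ring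
    rw [he]
    omega

theorem stmt11 (w : ℕ → ℤ) (hw : MemD w) : MemD (Shf w) := by
  obtain ⟨a, l, s, θ, ha, hs, hw⟩ := hw
  cases l with
  | zero =>
    refine ⟨s 1, 1, Shf s, θ, sturmian_binary hs 1 le_rfl, shf_sturmian hs, ?_⟩
    intro n hn
    have h1 := hw (n+1) (by omega)
    simp only [Shf, Prepend, Dbl] at *
    rw [h1]
    rcases Nat.lt_or_ge n 2 with h | h
    · interval_cases n <;> simp
    · have hle : ¬ n ≤ 1 := by omega
      simp only [if_neg hle, if_neg (by omega : ¬ n + 1 ≤ 0)]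
      congr 1
      omega
  | succ m =>
    refine ⟨a, m, s, θ, ha, hs, ?_⟩
    intro n hn
    have h1 := hw (n+1) (by omega)
    simp only [Shf, Prepend] at *
    rw [h1]
    rcases Nat.lt_or_ge n (m+1) with h | h
    · rw [if_pos (by omega), if_pos (by omega)]
    · rw [if_neg (by omega), if_neg (by omega)]
      congr 1
      omega
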